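/- Let C ⊆ Q² satisfy conditions (I) and (II). Then for every S ⊆ C(1) × C(2), the family P₃(S) = {C' ⊆ C : |C'| ≤ 3, S = desc(C')} has at most 2 elements. -/
import Mathlib


/-- The descendant code of a sub-code of a code of length 2, viewed as a set of pairs. -/
def desc2 {q : ℕ} (C' : Finset (Fin q × Fin q)) : Set (Fin q × Fin q) :=
  {x | (∃ c ∈ C', c.1 = x.1) ∧ (∃ c ∈ C', c.2 = x.2)}

/-- `C` is a `t`-MIPPC of length 2: for every descendant set produced by some nonempty
sub-code of size at most `t`, all such parent sets have a common codeword. -/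
def isMIPPC2 {q : ℕ} (t : ℕ) (C : Finset (Fin q × Fin q)) : Prop :=
  ∀ S : Set (Fin q × Fin q),
    (∃ C' : Finset (Fin q × Fin q), C' ⊆ C ∧ C'.Nonempty ∧ C'.card ≤ t ∧ desc2 C' = S) →
    ∃ c, ∀ C' : Finset (Fin q × Fin q),
      C' ⊆ C → C'.Nonempty → C'.card ≤ t → desc2 C' = S → c ∈ C'

/-- `A¹_a = {b : (a,b) ∈ C}`. -/
def A1 {q : ℕ} (C : Finset (Fin q × Fin q)) (a : Fin q) : Finset (Fin q) :=
  (C.filter (fun c => c.1 = a)).image Prod.snd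

/-- Condition (I). -/
def CondI {q : ℕ} (C : Finset (Fin q × Fin q)) : Prop :=
  ∀ a₁ a₂ : Fin q, a₁ ≠ a₂ → (A1 C a₁ ∩ A1 C a₂).card ≤ 1

/-- Condition (II). -/
def CondII {q : ℕ} (C : Finset (Fin q × Fin q)) : Prop :=
  ¬ ∃ a₁ a₂ a₃ b₁ b₂ b₃ : Fin q,
      a₁ ≠ a₂ ∧ a₁ ≠ a₃ ∧ a₂ ≠ a₃ ∧ b₁ ≠ b₂ ∧ b₁ ≠ b₃ ∧ b₂ ≠ b₃ ∧
      b₁ ∈ A1 C a₁ ∧ b₂ ∈ A1 C a₁ ∧ b₂ ∈ A1 C a₂ ∧ b₃ ∈ A1 C a₂ ∧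
      b₁ ∈ A1 C a₃ ∧ b₃ ∈ A1 C a₃

/- ### Auxiliary lemmas -/

lemma desc2_eq {q : ℕ} (C' : Finset (Fin q × Fin q)) :
    desc2 C' = ↑((C'.image Prod.fst) ×ˢ (C'.image Prod.snd)) := by
  ext ⟨x, y⟩
  simp [desc2, Finset.mem_product, Finset.mem_image, eq_comm]

lemma mem_A1 {q : ℕ} {C : Finset (Fin q × Fin q)} {a b : Fin q} (h : (a, b) ∈ C) :
    b ∈ A1 C a := by
  simp only [A1, Finset.mem_image, Finset.mem_filter]
  exact ⟨(a, b), ⟨h, rfl⟩, rfl⟩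

lemma two_mem {q : ℕ} {C : Finset (Fin q × Fin q)} (hI : CondI C) {a a' b b' : Fin q}
    (ha : a ≠ a') (hb : b ≠ b') (h1 : (a, b) ∈ C) (h2 : (a, b') ∈ C)
    (h3 : (a', b) ∈ C) (h4 : (a', b') ∈ C) : False := by
  have hsub : ({b, b'} : Finset (Fin q)) ⊆ A1 C a ∩ A1 C a' := by
    intro x hx
    rcases Finset.mem_insert.1 hx with rfl | hx
    · exact Finset.mem_inter.2 ⟨mem_A1 h1, mem_A1 h3⟩
    · rcases Finset.mem_singleton.1 hx with rfl
      exact Finset.mem_inter.2 ⟨mem_A1 h2, mem_A1 h4⟩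
  have h2' : (2 : ℕ) ≤ (A1 C a ∩ A1 C a').card := by
    calc 2 = ({b, b'} : Finset (Fin q)).card := (Finset.card_pair hb).symm
    _ ≤ _ := Finset.card_le_card hsub
  have := hI a a' ha
  omega

lemma extract3 {q : ℕ} {C' : Finset (Fin q × Fin q)} {a₁ a₂ a₃ : Fin q}
    (h : C'.image Prod.fst = {a₁, a₂, a₃}) (h12 : a₁ ≠ a₂) (h13 : a₁ ≠ a₃) (h23 : a₂ ≠ a₃)
    (hc : C'.card ≤ 3) :
    ∃ b₁ b₂ b₃, C' = {(a₁, b₁), (a₂, b₂), (a₃, b₃)} := by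
  have m1 : a₁ ∈ C'.image Prod.fst := by rw [h]; simp
  have m2 : a₂ ∈ C'.image Prod.fst := by rw [h]; simp
  have m3 : a₃ ∈ C'.image Prod.fst := by rw [h]; simp
  obtain ⟨⟨x1, b₁⟩, hp1, he1⟩ := Finset.mem_image.1 m1
  obtain ⟨⟨x2, b₂⟩, hp2, he2⟩ := Finset.mem_image.1 m2
  obtain ⟨⟨x3, b₃⟩, hp3, he3⟩ := Finset.mem_image.1 m3
  simp only at he1 he2 he3
  subst he1; subst he2; subst he3
  refine ⟨b₁, b₂, b₃, ?_⟩
  have hsub : ({(x1, b₁), (x2, b₂), (x3, b₃)} : Finset (Fin q × Fin q)) ⊆ C' := by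
    intro x hx
    simp only [Finset.mem_insert, Finset.mem_singleton] at hx
    rcases hx with rfl | rfl | rfl <;> assumption
  have hcard : ({(x1, b₁), (x2, b₂), (x3, b₃)} : Finset (Fin q × Fin q)).card = 3 := by
    rw [Finset.card_insert_of_notMem, Finset.card_insert_of_notMem, Finset.card_singleton]
    · simp only [Finset.mem_singleton]
      intro hx; exact h23 (congrArg Prod.fst hx)
    · simp only [Finset.mem_insert, Finset.mem_singleton]
      rintro (hx | hx)
      · exact h12 (congrArg Prod.fst hx)
      · exact h13 (congrArg Prod.fst hx)
  exact (Finset.eq_of_subset_of_card_le hsub (by omega)).symm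

lemma extract3' {q : ℕ} {C' : Finset (Fin q × Fin q)} {b₁ b₂ b₃ : Fin q}
    (h : C'.image Prod.snd = {b₁, b₂, b₃}) (h12 : b₁ ≠ b₂) (h13 : b₁ ≠ b₃) (h23 : b₂ ≠ b₃)
    (hc : C'.card ≤ 3) :
    ∃ a₁ a₂ a₃, C' = {(a₁, b₁), (a₂, b₂), (a₃, b₃)} := by
  have m1 : b₁ ∈ C'.image Prod.snd := by rw [h]; simp
  have m2 : b₂ ∈ C'.image Prod.snd := by rw [h]; simp
  have m3 : b₃ ∈ C'.image Prod.snd := by rw [h]; simp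
  obtain ⟨⟨a₁, y1⟩, hp1, he1⟩ := Finset.mem_image.1 m1
  obtain ⟨⟨a₂, y2⟩, hp2, he2⟩ := Finset.mem_image.1 m2
  obtain ⟨⟨a₃, y3⟩, hp3, he3⟩ := Finset.mem_image.1 m3
  simp only at he1 he2 he3
  subst he1; subst he2; subst he3
  refine ⟨a₁, a₂, a₃, ?_⟩
  have hsub : ({(a₁, y1), (a₂, y2), (a₃, y3)} : Finset (Fin q × Fin q)) ⊆ C' := by
    intro x hx
    simp only [Finset.mem_insert, Finset.mem_singleton] at hx
    rcases hx with rfl | rfl | rfl <;> assumption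
  have hcard : ({(a₁, y1), (a₂, y2), (a₃, y3)} : Finset (Fin q × Fin q)).card = 3 := by
    rw [Finset.card_insert_of_notMem, Finset.card_insert_of_notMem, Finset.card_singleton]
    · simp only [Finset.mem_singleton]
      intro hx; exact h23 (congrArg Prod.snd hx)
    · simp only [Finset.mem_insert, Finset.mem_singleton]
      rintro (hx | hx)
      · exact h12 (congrArg Prod.snd hx)
      · exact h13 (congrArg Prod.snd hx)
  exact (Finset.eq_of_subset_of_card_le hsub (by omega)).symm

lemma distinct_of_card3 {α : Type*} [DecidableEq α] {x y z : α}
    (h : ({x, y, z} : Finset α).card = 3) : x ≠ y ∧ x ≠ z ∧ y ≠ z := by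
  refine ⟨?_, ?_, ?_⟩ <;> rintro rfl
  · have hsub : ({x, x, z} : Finset α) ⊆ {x, z} := by
      intro a ha; simp at ha ⊢; tauto
    have h1 := Finset.card_le_card hsub
    have h2 := Finset.card_insert_le x ({z} : Finset α)
    simp only [Finset.card_singleton] at h2
    omega
  · have hsub : ({x, y, x} : Finset α) ⊆ {x, y} := by
      intro a ha; simp at ha ⊢; tauto
    have h1 := Finset.card_le_card hsub
    have h2 := Finset.card_insert_le x ({y} : Finset α)
    simp only [Finset.card_singleton] at h2
    omega
  · have hsub : ({x, y, y} : Finset α) ⊆ {x, y} := by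
      intro a ha; simp at ha ⊢; tauto
    have h1 := Finset.card_le_card hsub
    have h2 := Finset.card_insert_le x ({y} : Finset α)
    simp only [Finset.card_singleton] at h2
    omega

lemma prod_eq_prod {α β : Type*} [DecidableEq α] [DecidableEq β]
    {A₁ A₂ : Finset α} {B₁ B₂ : Finset β}
    (h : A₁ ×ˢ B₁ = A₂ ×ˢ B₂) (hne : (A₁ ×ˢ B₁).Nonempty) : A₁ = A₂ ∧ B₁ = B₂ := by
  obtain ⟨⟨a₀, b₀⟩, hm⟩ := hne
  have hm' := hm
  rw [h] at hm'
  rw [Finset.mem_product] at hm hm'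
  constructor
  · ext a
    constructor
    · intro ha
      have : (a, b₀) ∈ A₁ ×ˢ B₁ := Finset.mem_product.2 ⟨ha, hm.2⟩
      rw [h, Finset.mem_product] at this; exact this.1
    · intro ha
      have : (a, b₀) ∈ A₂ ×ˢ B₂ := Finset.mem_product.2 ⟨ha, hm'.2⟩
      rw [← h, Finset.mem_product] at this; exact this.1
  · ext b
    constructor
    · intro hb
      have : (a₀, b) ∈ A₁ ×ˢ B₁ := Finset.mem_product.2 ⟨hm.1, hb⟩
      rw [h, Finset.mem_product] at this; exact this.2
    · intro hb
      have : (a₀, b) ∈ A₂ ×ˢ B₂ := Finset.mem_product.2 ⟨hm'.1, hb⟩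
      rw [← h, Finset.mem_product] at this; exact this.2

lemma eq_prod_of_fst_singleton {q : ℕ} {C' : Finset (Fin q × Fin q)} {a : Fin q}
    {B : Finset (Fin q)} (hsub : C' ⊆ {a} ×ˢ B) (hs : C'.image Prod.snd = B) :
    C' = {a} ×ˢ B := by
  apply Finset.Subset.antisymm hsub
  rintro ⟨x, y⟩ hxy
  rw [Finset.mem_product, Finset.mem_singleton] at hxy
  obtain ⟨rfl, hy⟩ := hxy
  rw [← hs] at hy
  obtain ⟨⟨u, v⟩, hc, hv⟩ := Finset.mem_image.1 hy
  simp only at hv; subst hv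
  have hu := hsub hc
  rw [Finset.mem_product, Finset.mem_singleton] at hu
  have h1 : u = x := hu.1
  cases h1; exact hc

lemma eq_prod_of_snd_singleton {q : ℕ} {C' : Finset (Fin q × Fin q)} {b : Fin q}
    {A : Finset (Fin q)} (hsub : C' ⊆ A ×ˢ {b}) (hf : C'.image Prod.fst = A) :
    C' = A ×ˢ {b} := by
  apply Finset.Subset.antisymm hsub
  rintro ⟨x, y⟩ hxy
  rw [Finset.mem_product, Finset.mem_singleton] at hxy
  obtain ⟨hx, rfl⟩ := hxy
  rw [← hf] at hx
  obtain ⟨⟨u, v⟩, hc, hv⟩ := Finset.mem_image.1 hx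
  simp only at hv; subst hv
  have hu := hsub hc
  rw [Finset.mem_product, Finset.mem_singleton] at hu
  have h1 : v = y := hu.2
  cases h1; exact hc

/-- Case |A|=3, |B|=3: two matchings with the same column set must be equal. -/
lemma case33 {q : ℕ} {C : Finset (Fin q × Fin q)} (hI : CondI C) (hII : CondII C)
    {a₁ a₂ a₃ f1 f2 f3 g1 g2 g3 : Fin q}
    (ha12 : a₁ ≠ a₂) (ha13 : a₁ ≠ a₃) (ha23 : a₂ ≠ a₃)
    (hf12 : f1 ≠ f2) (hf13 : f1 ≠ f3) (hf23 : f2 ≠ f3)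
    (hg12 : g1 ≠ g2) (hg13 : g1 ≠ g3) (hg23 : g2 ≠ g3)
    (hset : ({g1, g2, g3} : Finset (Fin q)) = {f1, f2, f3})
    (hf1 : (a₁, f1) ∈ C) (hf2 : (a₂, f2) ∈ C) (hf3 : (a₃, f3) ∈ C)
    (hg1 : (a₁, g1) ∈ C) (hg2 : (a₂, g2) ∈ C) (hg3 : (a₃, g3) ∈ C) :
    g1 = f1 ∧ g2 = f2 ∧ g3 = f3 := by
  have hm1 : f1 = g1 ∨ f2 = g1 ∨ f3 = g1 := by
    have h : g1 ∈ ({f1, f2, f3} : Finset (Fin q)) := by rw [← hset]; simp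
    have h' : g1 = f1 ∨ g1 = f2 ∨ g1 = f3 := by simpa using h
    exact h'.imp Eq.symm (fun h'' => h''.imp Eq.symm Eq.symm)
  have hm2 : f1 = g2 ∨ f2 = g2 ∨ f3 = g2 := by
    have h : g2 ∈ ({f1, f2, f3} : Finset (Fin q)) := by rw [← hset]; simp
    have h' : g2 = f1 ∨ g2 = f2 ∨ g2 = f3 := by simpa using h
    exact h'.imp Eq.symm (fun h'' => h''.imp Eq.symm Eq.symm)
  have hm3 : f1 = g3 ∨ f2 = g3 ∨ f3 = g3 := by
    have h : g3 ∈ ({f1, f2, f3} : Finset (Fin q)) := by rw [← hset]; simp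
    have h' : g3 = f1 ∨ g3 = f2 ∨ g3 = f3 := by simpa using h
    exact h'.imp Eq.symm (fun h'' => h''.imp Eq.symm Eq.symm)
  rcases hm1 with rfl | rfl | rfl <;> rcases hm2 with rfl | rfl | rfl <;>
    rcases hm3 with rfl | rfl | rfl <;>
    first
      | exact ⟨rfl, rfl, rfl⟩
      | exact absurd rfl hg12
      | exact absurd rfl hg13
      | exact absurd rfl hg23
      | exact (two_mem hI ha12 hf12 hf1 hg1 hg2 hf2).elim
      | exact (two_mem hI ha13 hf13 hf1 hg1 hg3 hf3).elim
      | exact (two_mem hI ha23 hf23 hf2 hg2 hg3 hf3).elim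
      | exact (hII ⟨a₁, a₂, a₃, f1, f2, f3, ha12, ha13, ha23, hf12, hf13, hf23,
          mem_A1 hf1, mem_A1 hg1, mem_A1 hf2, mem_A1 hg2, mem_A1 hg3, mem_A1 hf3⟩).elim
      | exact (hII ⟨a₁, a₂, a₃, f3, f1, f2, ha12, ha13, ha23, hf13.symm, hf23.symm, hf12,
          mem_A1 hg1, mem_A1 hf1, mem_A1 hg2, mem_A1 hf2, mem_A1 hf3, mem_A1 hg3⟩).elim

/-- Case |A|=3, |B|=2: among three surjections onto a 2-element column set, two coincide. -/
lemma case32 {q : ℕ} {C : Finset (Fin q × Fin q)} (hI : CondI C)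
    {a₁ a₂ a₃ b₁ b₂ : Fin q}
    (ha12 : a₁ ≠ a₂) (ha13 : a₁ ≠ a₃) (ha23 : a₂ ≠ a₃) (hb : b₁ ≠ b₂)
    {f1 f2 f3 g1 g2 g3 k1 k2 k3 : Fin q}
    (hx1 : b₁ = f1 ∨ b₂ = f1) (hx2 : b₁ = f2 ∨ b₂ = f2) (hx3 : b₁ = f3 ∨ b₂ = f3)
    (hy1 : b₁ = g1 ∨ b₂ = g1) (hy2 : b₁ = g2 ∨ b₂ = g2) (hy3 : b₁ = g3 ∨ b₂ = g3)
    (hz1 : b₁ = k1 ∨ b₂ = k1) (hz2 : b₁ = k2 ∨ b₂ = k2) (hz3 : b₁ = k3 ∨ b₂ = k3)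
    (hf1 : (a₁, f1) ∈ C) (hf2 : (a₂, f2) ∈ C) (hf3 : (a₃, f3) ∈ C)
    (hg1 : (a₁, g1) ∈ C) (hg2 : (a₂, g2) ∈ C) (hg3 : (a₃, g3) ∈ C)
    (hk1 : (a₁, k1) ∈ C) (hk2 : (a₂, k2) ∈ C) (hk3 : (a₃, k3) ∈ C) :
    (f1 = g1 ∧ f2 = g2 ∧ f3 = g3) ∨ (f1 = k1 ∧ f2 = k2 ∧ f3 = k3) ∨
      (g1 = k1 ∧ g2 = k2 ∧ g3 = k3) := by
  rcases hx1 with rfl | rfl <;> rcases hx2 with rfl | rfl <;> rcases hx3 with rfl | rfl <;>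
    rcases hy1 with rfl | rfl <;> rcases hy2 with rfl | rfl <;> rcases hy3 with rfl | rfl <;>
    rcases hz1 with rfl | rfl <;> rcases hz2 with rfl | rfl <;> rcases hz3 with rfl | rfl <;>
    first
      | exact Or.inl ⟨rfl, rfl, rfl⟩
      | exact Or.inr (Or.inl ⟨rfl, rfl, rfl⟩)
      | exact Or.inr (Or.inr ⟨rfl, rfl, rfl⟩)
      | exact (two_mem hI ha12 hb ‹(a₁, b₁) ∈ C› ‹(a₁, b₂) ∈ C›
          ‹(a₂, b₁) ∈ C› ‹(a₂, b₂) ∈ C›).elim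
      | exact (two_mem hI ha13 hb ‹(a₁, b₁) ∈ C› ‹(a₁, b₂) ∈ C›
          ‹(a₃, b₁) ∈ C› ‹(a₃, b₂) ∈ C›).elim
      | exact (two_mem hI ha23 hb ‹(a₂, b₁) ∈ C› ‹(a₂, b₂) ∈ C›
          ‹(a₃, b₁) ∈ C› ‹(a₃, b₂) ∈ C›).elim

/-- Case |A|=2, |B|=3: among three surjections onto a 2-element row set, two coincide. -/
lemma case23 {q : ℕ} {C : Finset (Fin q × Fin q)} (hI : CondI C)
    {a₁ a₂ b₁ b₂ b₃ : Fin q}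
    (ha : a₁ ≠ a₂) (hb12 : b₁ ≠ b₂) (hb13 : b₁ ≠ b₃) (hb23 : b₂ ≠ b₃)
    {f1 f2 f3 g1 g2 g3 k1 k2 k3 : Fin q}
    (hx1 : a₁ = f1 ∨ a₂ = f1) (hx2 : a₁ = f2 ∨ a₂ = f2) (hx3 : a₁ = f3 ∨ a₂ = f3)
    (hy1 : a₁ = g1 ∨ a₂ = g1) (hy2 : a₁ = g2 ∨ a₂ = g2) (hy3 : a₁ = g3 ∨ a₂ = g3)
    (hz1 : a₁ = k1 ∨ a₂ = k1) (hz2 : a₁ = k2 ∨ a₂ = k2) (hz3 : a₁ = k3 ∨ a₂ = k3)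
    (hf1 : (f1, b₁) ∈ C) (hf2 : (f2, b₂) ∈ C) (hf3 : (f3, b₃) ∈ C)
    (hg1 : (g1, b₁) ∈ C) (hg2 : (g2, b₂) ∈ C) (hg3 : (g3, b₃) ∈ C)
    (hk1 : (k1, b₁) ∈ C) (hk2 : (k2, b₂) ∈ C) (hk3 : (k3, b₃) ∈ C) :
    (f1 = g1 ∧ f2 = g2 ∧ f3 = g3) ∨ (f1 = k1 ∧ f2 = k2 ∧ f3 = k3) ∨
      (g1 = k1 ∧ g2 = k2 ∧ g3 = k3) := by
  rcases hx1 with rfl | rfl <;> rcases hx2 with rfl | rfl <;> rcases hx3 with rfl | rfl <;>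
    rcases hy1 with rfl | rfl <;> rcases hy2 with rfl | rfl <;> rcases hy3 with rfl | rfl <;>
    rcases hz1 with rfl | rfl <;> rcases hz2 with rfl | rfl <;> rcases hz3 with rfl | rfl <;>
    first
      | exact Or.inl ⟨rfl, rfl, rfl⟩
      | exact Or.inr (Or.inl ⟨rfl, rfl, rfl⟩)
      | exact Or.inr (Or.inr ⟨rfl, rfl, rfl⟩)
      | exact (two_mem hI ha hb12 ‹(a₁, b₁) ∈ C› ‹(a₁, b₂) ∈ C›
          ‹(a₂, b₁) ∈ C› ‹(a₂, b₂) ∈ C›).elim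
      | exact (two_mem hI ha hb13 ‹(a₁, b₁) ∈ C› ‹(a₁, b₃) ∈ C›
          ‹(a₂, b₁) ∈ C› ‹(a₂, b₃) ∈ C›).elim
      | exact (two_mem hI ha hb23 ‹(a₁, b₂) ∈ C› ‹(a₁, b₃) ∈ C›
          ‹(a₂, b₂) ∈ C› ‹(a₂, b₃) ∈ C›).elim

lemma case22core {q : ℕ} {C C' : Finset (Fin q × Fin q)} {a₁ a₂ b₁ b₂ : Fin q}
    (hb : b₁ ≠ b₂) (hCC : C' ⊆ C) (hmiss : (a₂, b₂) ∉ C)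
    (hsub : C' ⊆ ({a₁, a₂} : Finset (Fin q)) ×ˢ ({b₁, b₂} : Finset (Fin q)))
    (hf : C'.image Prod.fst = {a₁, a₂}) (hs : C'.image Prod.snd = {b₁, b₂}) :
    C' = {(a₁, b₂), (a₂, b₁)} ∨ C' = {(a₁, b₁), (a₁, b₂), (a₂, b₁)} := by
  have hm' : (a₂, b₂) ∉ C' := fun h => hmiss (hCC h)
  have hb2 : (a₁, b₂) ∈ C' := by
    have hmem : b₂ ∈ C'.image Prod.snd := by rw [hs]; simp
    obtain ⟨⟨u, v⟩, hc, hv⟩ := Finset.mem_image.1 hmem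
    simp only at hv; subst hv
    have hu := hsub hc
    rw [Finset.mem_product] at hu
    rcases Finset.mem_insert.1 hu.1 with h | h
    · have : u = a₁ := h
      cases this; exact hc
    · have : u = a₂ := Finset.mem_singleton.1 h
      cases this; exact absurd hc hm'
  have ha2 : (a₂, b₁) ∈ C' := by
    have hmem : a₂ ∈ C'.image Prod.fst := by rw [hf]; simp
    obtain ⟨⟨u, v⟩, hc, hv⟩ := Finset.mem_image.1 hmem
    simp only at hv; subst hv
    have hu := hsub hc
    rw [Finset.mem_product] at hu
    rcases Finset.mem_insert.1 hu.2 with h | h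
    · have : v = b₁ := h
      cases this; exact hc
    · have : v = b₂ := Finset.mem_singleton.1 h
      cases this; exact absurd hc hm'
  have hupper : ∀ c ∈ C', c = (a₁, b₁) ∨ c = (a₁, b₂) ∨ c = (a₂, b₁) := by
    rintro ⟨u, v⟩ hc
    have hu := hsub hc
    rw [Finset.mem_product] at hu
    have hu1 : u = a₁ ∨ u = a₂ := by simpa using hu.1
    have hu2 : v = b₁ ∨ v = b₂ := by simpa using hu.2
    rcases hu1 with rfl | rfl <;> rcases hu2 with rfl | rfl <;>
      first
        | exact absurd hc hm'
        | simp
  by_cases h11 : (a₁, b₁) ∈ C'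
  · right
    apply Finset.Subset.antisymm
    · intro c hc
      rcases hupper c hc with rfl | rfl | rfl <;> simp
    · intro c hc
      simp only [Finset.mem_insert, Finset.mem_singleton] at hc
      rcases hc with rfl | rfl | rfl <;> assumption
  · left
    apply Finset.Subset.antisymm
    · intro c hc
      rcases hupper c hc with rfl | rfl | rfl
      · exact absurd hc h11
      · simp
      · simp
    · intro c hc
      simp only [Finset.mem_insert, Finset.mem_singleton] at hc
      rcases hc with rfl | rfl <;> assumption

lemma pigeon2 {α : Type*} {C₁ C₂ C₃ X Y : α}
    (h1 : C₁ = X ∨ C₁ = Y) (h2 : C₂ = X ∨ C₂ = Y) (h3 : C₃ = X ∨ C₃ = Y) :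
    C₁ = C₂ ∨ C₁ = C₃ ∨ C₂ = C₃ := by
  rcases h1 with rfl | rfl <;> rcases h2 with h2 | h2 <;> rcases h3 with h3 | h3 <;>
    first
      | exact Or.inl h2.symm
      | exact Or.inr (Or.inl h3.symm)
      | exact Or.inr (Or.inr (h2.trans h3.symm))

lemma case22all {q : ℕ} {C C₁ C₂ C₃ : Finset (Fin q × Fin q)} {a₁ a₂ b₁ b₂ : Fin q}
    (hb : b₁ ≠ b₂) (h1C : C₁ ⊆ C) (h2C : C₂ ⊆ C) (h3C : C₃ ⊆ C) (hmiss : (a₂, b₂) ∉ C)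
    (hsub1 : C₁ ⊆ ({a₁, a₂} : Finset (Fin q)) ×ˢ ({b₁, b₂} : Finset (Fin q)))
    (hsub2 : C₂ ⊆ ({a₁, a₂} : Finset (Fin q)) ×ˢ ({b₁, b₂} : Finset (Fin q)))
    (hsub3 : C₃ ⊆ ({a₁, a₂} : Finset (Fin q)) ×ˢ ({b₁, b₂} : Finset (Fin q)))
    (hf1 : C₁.image Prod.fst = {a₁, a₂}) (hf2 : C₂.image Prod.fst = {a₁, a₂})
    (hf3 : C₃.image Prod.fst = {a₁, a₂})
    (hs1 : C₁.image Prod.snd = {b₁, b₂}) (hs2 : C₂.image Prod.snd = {b₁, b₂})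
    (hs3 : C₃.image Prod.snd = {b₁, b₂}) :
    C₁ = C₂ ∨ C₁ = C₃ ∨ C₂ = C₃ :=
  pigeon2 (case22core hb h1C hmiss hsub1 hf1 hs1) (case22core hb h2C hmiss hsub2 hf2 hs2)
    (case22core hb h3C hmiss hsub3 hf3 hs3)

lemma val_mem_snd {q : ℕ} {C' : Finset (Fin q × Fin q)} {x y b₁ b₂ : Fin q}
    (hm : (x, y) ∈ C') (hB : C'.image Prod.snd = {b₁, b₂}) : b₁ = y ∨ b₂ = y := by
  have h : y ∈ ({b₁, b₂} : Finset (Fin q)) := by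
    rw [← hB]; exact Finset.mem_image.2 ⟨(x, y), hm, rfl⟩
  have h' : y = b₁ ∨ y = b₂ := by simpa using h
  exact h'.imp Eq.symm Eq.symm

lemma val_mem_fst {q : ℕ} {C' : Finset (Fin q × Fin q)} {x y a₁ a₂ : Fin q}
    (hm : (x, y) ∈ C') (hA : C'.image Prod.fst = {a₁, a₂}) : a₁ = x ∨ a₂ = x := by
  have h : x ∈ ({a₁, a₂} : Finset (Fin q)) := by
    rw [← hA]; exact Finset.mem_image.2 ⟨(x, y), hm, rfl⟩
  have h' : x = a₁ ∨ x = a₂ := by simpa using h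
  exact h'.imp Eq.symm Eq.symm

/-- Under conditions (I) and (II), for every `S` there are at most two sub-codes of size
at most 3 whose descendant code equals `S`. -/
theorem parent_sets_at_most_two {q : ℕ} (C : Finset (Fin q × Fin q))
    (hI : CondI C) (hII : CondII C) :
    ∀ S : Set (Fin q × Fin q),
      ∀ C₁ C₂ C₃ : Finset (Fin q × Fin q),
        C₁ ⊆ C → C₂ ⊆ C → C₃ ⊆ C →
        C₁.card ≤ 3 → C₂.card ≤ 3 → C₃.card ≤ 3 →
        desc2 C₁ = S → desc2 C₂ = S → desc2 C₃ = S →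
        C₁ = C₂ ∨ C₁ = C₃ ∨ C₂ = C₃ := by
  intro S C₁ C₂ C₃ h1C h2C h3C hc1 hc2 hc3 hd1 hd2 hd3
  have e12 : (C₁.image Prod.fst) ×ˢ (C₁.image Prod.snd)
      = (C₂.image Prod.fst) ×ˢ (C₂.image Prod.snd) :=
    Finset.coe_injective (by rw [← desc2_eq, ← desc2_eq, hd1, hd2])
  have e13 : (C₁.image Prod.fst) ×ˢ (C₁.image Prod.snd)
      = (C₃.image Prod.fst) ×ˢ (C₃.image Prod.snd) :=
    Finset.coe_injective (by rw [← desc2_eq, ← desc2_eq, hd1, hd3])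
  by_cases hne : C₁.Nonempty
  swap
  · rw [Finset.not_nonempty_iff_eq_empty] at hne
    subst hne
    left
    simp only [Finset.image_empty, Finset.empty_product] at e12
    have h2 := Finset.product_eq_empty.1 e12.symm
    rcases h2 with h | h <;> rw [Finset.image_eq_empty] at h <;> exact h.symm
  · have hPne : ((C₁.image Prod.fst) ×ˢ (C₁.image Prod.snd)).Nonempty := by
      obtain ⟨c, hc⟩ := hne
      exact ⟨c, Finset.subset_product hc⟩
    obtain ⟨hA2, hB2⟩ := prod_eq_prod e12 hPne
    obtain ⟨hA3, hB3⟩ := prod_eq_prod e13 hPne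
    have hs1 : C₁ ⊆ (C₁.image Prod.fst) ×ˢ (C₁.image Prod.snd) := Finset.subset_product
    have hs2 : C₂ ⊆ (C₁.image Prod.fst) ×ˢ (C₁.image Prod.snd) := by
      rw [hA2, hB2]; exact Finset.subset_product
    have hs3 : C₃ ⊆ (C₁.image Prod.fst) ×ˢ (C₁.image Prod.snd) := by
      rw [hA3, hB3]; exact Finset.subset_product
    have hApos : 1 ≤ (C₁.image Prod.fst).card := Finset.card_pos.2 (hne.image _)
    have hBpos : 1 ≤ (C₁.image Prod.snd).card := Finset.card_pos.2 (hne.image _)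
    have hAle : (C₁.image Prod.fst).card ≤ 3 := le_trans Finset.card_image_le hc1
    have hBle : (C₁.image Prod.snd).card ≤ 3 := le_trans Finset.card_image_le hc1
    have hAcase : (C₁.image Prod.fst).card = 1 ∨ (C₁.image Prod.fst).card = 2 ∨
        (C₁.image Prod.fst).card = 3 := by omega
    have hBcase : (C₁.image Prod.snd).card = 1 ∨ (C₁.image Prod.snd).card = 2 ∨
        (C₁.image Prod.snd).card = 3 := by omega
    -- A = 1 case
    rcases hAcase with hA_1 | hA_2 | hA_3
    · obtain ⟨a, hAa⟩ := Finset.card_eq_one.1 hA_1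
      left
      have P1 : C₁ = {a} ×ˢ (C₁.image Prod.snd) :=
        eq_prod_of_fst_singleton (by rw [← hAa]; exact hs1) rfl
      have P2 : C₂ = {a} ×ˢ (C₁.image Prod.snd) :=
        eq_prod_of_fst_singleton (by rw [← hAa]; exact hs2) hB2.symm
      exact P1.trans P2.symm
    · rcases hBcase with hB_1 | hB_2 | hB_3
      · -- B = 1
        obtain ⟨b, hBb⟩ := Finset.card_eq_one.1 hB_1
        left
        have P1 : C₁ = (C₁.image Prod.fst) ×ˢ {b} :=
          eq_prod_of_snd_singleton (by rw [← hBb]; exact hs1) rfl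
        have P2 : C₂ = (C₁.image Prod.fst) ×ˢ {b} :=
          eq_prod_of_snd_singleton (by rw [← hBb]; exact hs2) hA2.symm
        exact P1.trans P2.symm
      · -- (2,2)
        obtain ⟨a₁, a₂, ha, hAeq⟩ := Finset.card_eq_two.1 hA_2
        obtain ⟨b₁, b₂, hbne, hBeq⟩ := Finset.card_eq_two.1 hB_2
        have hsub1' : C₁ ⊆ ({a₁, a₂} : Finset (Fin q)) ×ˢ ({b₁, b₂} : Finset (Fin q)) := by
          rw [← hAeq, ← hBeq]; exact hs1
        have hsub2' : C₂ ⊆ ({a₁, a₂} : Finset (Fin q)) ×ˢ ({b₁, b₂} : Finset (Fin q)) := by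
          rw [← hAeq, ← hBeq]; exact hs2
        have hsub3' : C₃ ⊆ ({a₁, a₂} : Finset (Fin q)) ×ˢ ({b₁, b₂} : Finset (Fin q)) := by
          rw [← hAeq, ← hBeq]; exact hs3
        have hf1' : C₁.image Prod.fst = {a₁, a₂} := hAeq
        have hf2' : C₂.image Prod.fst = {a₁, a₂} := hA2.symm.trans hAeq
        have hf3' : C₃.image Prod.fst = {a₁, a₂} := hA3.symm.trans hAeq
        have hg1' : C₁.image Prod.snd = {b₁, b₂} := hBeq
        have hg2' : C₂.image Prod.snd = {b₁, b₂} := hB2.symm.trans hBeq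
        have hg3' : C₃.image Prod.snd = {b₁, b₂} := hB3.symm.trans hBeq
        have h4 : (a₁, b₁) ∉ C ∨ (a₁, b₂) ∉ C ∨ (a₂, b₁) ∉ C ∨ (a₂, b₂) ∉ C := by
          by_contra hh
          push_neg at hh
          exact two_mem hI ha hbne hh.1 hh.2.1 hh.2.2.1 hh.2.2.2
        rcases h4 with hm | hm | hm | hm
        · exact case22all hbne.symm h1C h2C h3C hm
            (by rw [Finset.pair_comm a₂ a₁, Finset.pair_comm b₂ b₁]; exact hsub1')
            (by rw [Finset.pair_comm a₂ a₁, Finset.pair_comm b₂ b₁]; exact hsub2')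
            (by rw [Finset.pair_comm a₂ a₁, Finset.pair_comm b₂ b₁]; exact hsub3')
            (by rw [Finset.pair_comm a₂ a₁]; exact hf1')
            (by rw [Finset.pair_comm a₂ a₁]; exact hf2')
            (by rw [Finset.pair_comm a₂ a₁]; exact hf3')
            (by rw [Finset.pair_comm b₂ b₁]; exact hg1')
            (by rw [Finset.pair_comm b₂ b₁]; exact hg2')
            (by rw [Finset.pair_comm b₂ b₁]; exact hg3')
        · exact case22all hbne h1C h2C h3C hm
            (by rw [Finset.pair_comm a₂ a₁]; exact hsub1')
            (by rw [Finset.pair_comm a₂ a₁]; exact hsub2')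
            (by rw [Finset.pair_comm a₂ a₁]; exact hsub3')
            (by rw [Finset.pair_comm a₂ a₁]; exact hf1')
            (by rw [Finset.pair_comm a₂ a₁]; exact hf2')
            (by rw [Finset.pair_comm a₂ a₁]; exact hf3')
            hg1' hg2' hg3'
        · exact case22all hbne.symm h1C h2C h3C hm
            (by rw [Finset.pair_comm b₂ b₁]; exact hsub1')
            (by rw [Finset.pair_comm b₂ b₁]; exact hsub2')
            (by rw [Finset.pair_comm b₂ b₁]; exact hsub3')
            hf1' hf2' hf3'
            (by rw [Finset.pair_comm b₂ b₁]; exact hg1')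
            (by rw [Finset.pair_comm b₂ b₁]; exact hg2')
            (by rw [Finset.pair_comm b₂ b₁]; exact hg3')
        · exact case22all hbne h1C h2C h3C hm hsub1' hsub2' hsub3'
            hf1' hf2' hf3' hg1' hg2' hg3'
      · -- (2,3)
        obtain ⟨a₁, a₂, ha, hAeq⟩ := Finset.card_eq_two.1 hA_2
        obtain ⟨b₁, b₂, b₃, hb12, hb13, hb23, hBeq⟩ := Finset.card_eq_three.1 hB_3
        obtain ⟨f1, f2, f3, hC1eq⟩ := extract3' hBeq hb12 hb13 hb23 hc1
        obtain ⟨g1, g2, g3, hC2eq⟩ := extract3' (hB2.symm.trans hBeq) hb12 hb13 hb23 hc2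
        obtain ⟨k1, k2, k3, hC3eq⟩ := extract3' (hB3.symm.trans hBeq) hb12 hb13 hb23 hc3
        have hA1' : C₁.image Prod.fst = {a₁, a₂} := hAeq
        have hA2' : C₂.image Prod.fst = {a₁, a₂} := hA2.symm.trans hAeq
        have hA3' : C₃.image Prod.fst = {a₁, a₂} := hA3.symm.trans hAeq
        have m11 : (f1, b₁) ∈ C₁ := by rw [hC1eq]; simp
        have m12 : (f2, b₂) ∈ C₁ := by rw [hC1eq]; simp
        have m13 : (f3, b₃) ∈ C₁ := by rw [hC1eq]; simp
        have m21 : (g1, b₁) ∈ C₂ := by rw [hC2eq]; simp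
        have m22 : (g2, b₂) ∈ C₂ := by rw [hC2eq]; simp
        have m23 : (g3, b₃) ∈ C₂ := by rw [hC2eq]; simp
        have m31 : (k1, b₁) ∈ C₃ := by rw [hC3eq]; simp
        have m32 : (k2, b₂) ∈ C₃ := by rw [hC3eq]; simp
        have m33 : (k3, b₃) ∈ C₃ := by rw [hC3eq]; simp
        have hres := case23 hI ha hb12 hb13 hb23
          (val_mem_fst m11 hA1') (val_mem_fst m12 hA1') (val_mem_fst m13 hA1')
          (val_mem_fst m21 hA2') (val_mem_fst m22 hA2') (val_mem_fst m23 hA2')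
          (val_mem_fst m31 hA3') (val_mem_fst m32 hA3') (val_mem_fst m33 hA3')
          (h1C m11) (h1C m12) (h1C m13) (h2C m21) (h2C m22) (h2C m23)
          (h3C m31) (h3C m32) (h3C m33)
        rcases hres with ⟨e1, e2, e3⟩ | ⟨e1, e2, e3⟩ | ⟨e1, e2, e3⟩
        · left; rw [hC1eq, hC2eq, e1, e2, e3]
        · right; left; rw [hC1eq, hC3eq, e1, e2, e3]
        · right; right; rw [hC2eq, hC3eq, e1, e2, e3]
    · rcases hBcase with hB_1 | hB_2 | hB_3
      · -- B = 1
        obtain ⟨b, hBb⟩ := Finset.card_eq_one.1 hB_1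
        left
        have P1 : C₁ = (C₁.image Prod.fst) ×ˢ {b} :=
          eq_prod_of_snd_singleton (by rw [← hBb]; exact hs1) rfl
        have P2 : C₂ = (C₁.image Prod.fst) ×ˢ {b} :=
          eq_prod_of_snd_singleton (by rw [← hBb]; exact hs2) hA2.symm
        exact P1.trans P2.symm
      · -- (3,2)
        obtain ⟨a₁, a₂, a₃, ha12, ha13, ha23, hAeq⟩ := Finset.card_eq_three.1 hA_3
        obtain ⟨b₁, b₂, hbne, hBeq⟩ := Finset.card_eq_two.1 hB_2
        obtain ⟨f1, f2, f3, hC1eq⟩ := extract3 hAeq ha12 ha13 ha23 hc1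
        obtain ⟨g1, g2, g3, hC2eq⟩ := extract3 (hA2.symm.trans hAeq) ha12 ha13 ha23 hc2
        obtain ⟨k1, k2, k3, hC3eq⟩ := extract3 (hA3.symm.trans hAeq) ha12 ha13 ha23 hc3
        have hB1' : C₁.image Prod.snd = {b₁, b₂} := hBeq
        have hB2' : C₂.image Prod.snd = {b₁, b₂} := hB2.symm.trans hBeq
        have hB3' : C₃.image Prod.snd = {b₁, b₂} := hB3.symm.trans hBeq
        have m11 : (a₁, f1) ∈ C₁ := by rw [hC1eq]; simp
        have m12 : (a₂, f2) ∈ C₁ := by rw [hC1eq]; simp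
        have m13 : (a₃, f3) ∈ C₁ := by rw [hC1eq]; simp
        have m21 : (a₁, g1) ∈ C₂ := by rw [hC2eq]; simp
        have m22 : (a₂, g2) ∈ C₂ := by rw [hC2eq]; simp
        have m23 : (a₃, g3) ∈ C₂ := by rw [hC2eq]; simp
        have m31 : (a₁, k1) ∈ C₃ := by rw [hC3eq]; simp
        have m32 : (a₂, k2) ∈ C₃ := by rw [hC3eq]; simp
        have m33 : (a₃, k3) ∈ C₃ := by rw [hC3eq]; simp
        have hres := case32 hI ha12 ha13 ha23 hbne
          (val_mem_snd m11 hB1') (val_mem_snd m12 hB1') (val_mem_snd m13 hB1')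
          (val_mem_snd m21 hB2') (val_mem_snd m22 hB2') (val_mem_snd m23 hB2')
          (val_mem_snd m31 hB3') (val_mem_snd m32 hB3') (val_mem_snd m33 hB3')
          (h1C m11) (h1C m12) (h1C m13) (h2C m21) (h2C m22) (h2C m23)
          (h3C m31) (h3C m32) (h3C m33)
        rcases hres with ⟨e1, e2, e3⟩ | ⟨e1, e2, e3⟩ | ⟨e1, e2, e3⟩
        · left; rw [hC1eq, hC2eq, e1, e2, e3]
        · right; left; rw [hC1eq, hC3eq, e1, e2, e3]
        · right; right; rw [hC2eq, hC3eq, e1, e2, e3]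
      · -- (3,3)
        obtain ⟨a₁, a₂, a₃, ha12, ha13, ha23, hAeq⟩ := Finset.card_eq_three.1 hA_3
        obtain ⟨f1, f2, f3, hC1eq⟩ := extract3 hAeq ha12 ha13 ha23 hc1
        obtain ⟨g1, g2, g3, hC2eq⟩ := extract3 (hA2.symm.trans hAeq) ha12 ha13 ha23 hc2
        have himg1 : C₁.image Prod.snd = {f1, f2, f3} := by rw [hC1eq]; simp
        have himg2 : C₂.image Prod.snd = {g1, g2, g3} := by rw [hC2eq]; simp
        have hcard1 : ({f1, f2, f3} : Finset (Fin q)).card = 3 := by rw [← himg1]; exact hB_3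
        have hcard2 : ({g1, g2, g3} : Finset (Fin q)).card = 3 := by
          rw [← himg2, ← hB2]; exact hB_3
        obtain ⟨hf12, hf13, hf23⟩ := distinct_of_card3 hcard1
        obtain ⟨hg12, hg13, hg23⟩ := distinct_of_card3 hcard2
        have hsetg : ({g1, g2, g3} : Finset (Fin q)) = {f1, f2, f3} :=
          himg2.symm.trans (hB2.symm.trans himg1)
        have m11 : (a₁, f1) ∈ C₁ := by rw [hC1eq]; simp
        have m12 : (a₂, f2) ∈ C₁ := by rw [hC1eq]; simp
        have m13 : (a₃, f3) ∈ C₁ := by rw [hC1eq]; simp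
        have m21 : (a₁, g1) ∈ C₂ := by rw [hC2eq]; simp
        have m22 : (a₂, g2) ∈ C₂ := by rw [hC2eq]; simp
        have m23 : (a₃, g3) ∈ C₂ := by rw [hC2eq]; simp
        obtain ⟨e1, e2, e3⟩ := case33 hI hII ha12 ha13 ha23 hf12 hf13 hf23 hg12 hg13 hg23
          hsetg (h1C m11) (h1C m12) (h1C m13) (h2C m21) (h2C m22) (h2C m23)
        left
        rw [hC1eq, hC2eq, e1, e2, e3]
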